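/- Let μ₀ be a probability measure on (Θ, ℬ), ε > 0, and ν a probability measure satisfying the ε-inferential-privacy constraint: ν(B')/ν(B'') ≤ e^ε μ₀(B')/μ₀(B'') whenever μ₀(B'), μ₀(B'') > 0. Let g = dν/dμ₀ be the Radon–Nikodym derivative and let e^{ε̄} be the essential supremum of g with respect to μ₀. Then ε̄ ≤ ε and g(θ) ∈ [e^{ε̄ - ε}, e^{ε̄}] for μ₀-almost every θ. -/

import Mathlib

open MeasureTheory
open scoped ENNReal NNReal

/-- Under the ε-inferential-privacy constraint, the density g = dν/dμ₀ satisfies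
ess sup g ≤ e^ε (i.e. ε̄ ≤ ε) and g ∈ [e^{ε̄-ε}, e^{ε̄}] μ₀-a.e., where e^{ε̄} = ess sup g. -/
theorem stmt_3 {Θ : Type*} [MeasurableSpace Θ] (μ₀ ν : Measure Θ)
    [IsProbabilityMeasure μ₀] [IsProbabilityMeasure ν]
    (ε : ℝ) (hε : 0 < ε) (hac : ν ≪ μ₀)
    (h : ∀ B' B'', MeasurableSet B' → MeasurableSet B'' → 0 < μ₀ B' → 0 < μ₀ B'' →
      ν B' * μ₀ B'' ≤ ENNReal.ofReal (Real.exp ε) * (ν B'' * μ₀ B')) :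
    essSup (ν.rnDeriv μ₀) μ₀ ≤ ENNReal.ofReal (Real.exp ε) ∧
    ∀ᵐ θ ∂μ₀,
      essSup (ν.rnDeriv μ₀) μ₀ ≤ ENNReal.ofReal (Real.exp ε) * ν.rnDeriv μ₀ θ ∧
      ν.rnDeriv μ₀ θ ≤ essSup (ν.rnDeriv μ₀) μ₀ := by
  set c := ENNReal.ofReal (Real.exp ε) with hcdef
  have hc0 : c ≠ 0 := by
    simp [hcdef, ENNReal.ofReal_eq_zero, not_le, Real.exp_pos]
  have hctop : c ≠ ⊤ := ENNReal.ofReal_ne_top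
  set g := ν.rnDeriv μ₀ with hgdef
  have hgm : Measurable g := Measure.measurable_rnDeriv ν μ₀
  set M := essSup g μ₀ with hMdef
  -- lower bound on ν of superlevel sets
  have hlow : ∀ a : ℝ≥0∞, a * μ₀ {θ | a < g θ} ≤ ν {θ | a < g θ} := by
    intro a
    rw [← Measure.setLIntegral_rnDeriv hac]
    calc a * μ₀ {θ | a < g θ} = ∫⁻ _ in {θ | a < g θ}, a ∂μ₀ :=
          (setLIntegral_const _ _).symm
      _ ≤ ∫⁻ θ in {θ | a < g θ}, g θ ∂μ₀ :=
          setLIntegral_mono hgm fun θ hθ => le_of_lt hθ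
  -- upper bound on ν of sublevel sets
  have hupp : ∀ u : ℝ≥0∞, ν {θ | g θ ≤ u} ≤ u * μ₀ {θ | g θ ≤ u} := by
    intro u
    rw [← Measure.setLIntegral_rnDeriv hac]
    calc ∫⁻ θ in {θ | g θ ≤ u}, g θ ∂μ₀ ≤ ∫⁻ _ in {θ | g θ ≤ u}, u ∂μ₀ :=
          setLIntegral_mono measurable_const fun θ hθ => hθ
      _ = u * μ₀ {θ | g θ ≤ u} := setLIntegral_const _ _
  have hmeasB : ∀ a : ℝ≥0∞, MeasurableSet {θ | a < g θ} := fun a =>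
    measurableSet_lt measurable_const hgm
  have hmeasA : ∀ u : ℝ≥0∞, MeasurableSet {θ | g θ ≤ u} := fun u =>
    measurableSet_le hgm measurable_const
  -- key 1 : superlevel sets above c are null
  have key1 : ∀ t : ℝ≥0∞, c < t → μ₀ {θ | t < g θ} = 0 := by
    intro t ht
    by_contra hA
    have hApos : 0 < μ₀ {θ | t < g θ} := pos_iff_ne_zero.mpr hA
    have h1 := h {θ | t < g θ} Set.univ (hmeasB t) MeasurableSet.univ hApos (by simp)
    simp only [measure_univ, mul_one, one_mul] at h1
    have h2 : t * μ₀ {θ | t < g θ} ≤ c * μ₀ {θ | t < g θ} :=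
      le_trans (hlow t) h1
    have := (ENNReal.mul_le_mul_iff_left hA (measure_ne_top μ₀ _)).mp h2
    exact absurd this (not_le.mpr ht)
  -- a.e. g ≤ c
  have hae1 : ∀ᵐ θ ∂μ₀, g θ ≤ c := by
    have hnull : μ₀ {θ | c < g θ} = 0 := by
      have hsub : {θ | c < g θ} ⊆
          ⋃ q : ℚ, {θ | (Real.toNNReal q : ℝ≥0∞) < g θ ∧ c < (Real.toNNReal q : ℝ≥0∞)} := by
        intro θ hθ
        obtain ⟨q, _, h1, h2⟩ := ENNReal.lt_iff_exists_rat_btwn.mp hθ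
        exact Set.mem_iUnion.mpr ⟨q, h2, h1⟩
      refine measure_mono_null hsub (measure_iUnion_null fun q => ?_)
      by_cases hq : c < (Real.toNNReal q : ℝ≥0∞)
      · exact measure_mono_null (fun θ hθ => hθ.1) (key1 _ hq)
      · have : {θ | (Real.toNNReal q : ℝ≥0∞) < g θ ∧ c < (Real.toNNReal q : ℝ≥0∞)} = ∅ := by
          ext θ; simp [hq]
        simp [this]
    rw [ae_iff]
    simpa [not_le] using hnull
  have part1 : M ≤ c := essSup_le_of_ae_le c hae1
  have hMtop : M ≠ ⊤ := fun hM => hctop (top_le_iff.mp (hM ▸ part1))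
  -- key 2 : sublevel sets below M/c are null
  have key2 : ∀ u : ℝ≥0∞, c * u < M → μ₀ {θ | g θ ≤ u} = 0 := by
    intro u hu
    by_contra hA
    have hApos : 0 < μ₀ {θ | g θ ≤ u} := pos_iff_ne_zero.mpr hA
    obtain ⟨a, ha1, ha2⟩ := exists_between hu
    have hB : μ₀ {θ | a < g θ} ≠ 0 := by
      intro hB0
      have : ∀ᵐ θ ∂μ₀, g θ ≤ a := by
        rw [ae_iff]; simpa [not_le] using hB0
      exact absurd (essSup_le_of_ae_le a this) (not_le.mpr ha2)
    have hBpos : 0 < μ₀ {θ | a < g θ} := pos_iff_ne_zero.mpr hB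
    have hcon := h {θ | a < g θ} {θ | g θ ≤ u} (hmeasB a) (hmeasA u) hBpos hApos
    have hchain : a * (μ₀ {θ | a < g θ} * μ₀ {θ | g θ ≤ u}) ≤
        (c * u) * (μ₀ {θ | a < g θ} * μ₀ {θ | g θ ≤ u}) := by
      calc a * (μ₀ {θ | a < g θ} * μ₀ {θ | g θ ≤ u})
          = (a * μ₀ {θ | a < g θ}) * μ₀ {θ | g θ ≤ u} := by ring
        _ ≤ ν {θ | a < g θ} * μ₀ {θ | g θ ≤ u} := by
            exact mul_le_mul_left (hlow a) _
        _ ≤ c * (ν {θ | g θ ≤ u} * μ₀ {θ | a < g θ}) := hcon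
        _ ≤ c * ((u * μ₀ {θ | g θ ≤ u}) * μ₀ {θ | a < g θ}) := by
            exact mul_le_mul_right (mul_le_mul_left (hupp u) _) _
        _ = (c * u) * (μ₀ {θ | a < g θ} * μ₀ {θ | g θ ≤ u}) := by ring
    have hprodne : μ₀ {θ | a < g θ} * μ₀ {θ | g θ ≤ u} ≠ 0 :=
      mul_ne_zero hB hA
    have hprodtop : μ₀ {θ | a < g θ} * μ₀ {θ | g θ ≤ u} ≠ ⊤ :=
      ENNReal.mul_ne_top (measure_ne_top _ _) (measure_ne_top _ _)
    have := (ENNReal.mul_le_mul_iff_left hprodne hprodtop).mp hchain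
    exact absurd this (not_le.mpr ha1)
  -- a.e. M ≤ c * g
  have hae2 : ∀ᵐ θ ∂μ₀, M ≤ c * g θ := by
    have hnull : μ₀ {θ | c * g θ < M} = 0 := by
      have hsub : {θ | c * g θ < M} ⊆
          ⋃ q : ℚ, {θ | g θ ≤ (Real.toNNReal q : ℝ≥0∞) / c ∧
            c * ((Real.toNNReal q : ℝ≥0∞) / c) < M} := by
        intro θ hθ
        obtain ⟨q, _, h1, h2⟩ := ENNReal.lt_iff_exists_rat_btwn.mp (hθ : c * g θ < M)
        refine Set.mem_iUnion.mpr ⟨q, ?_, ?_⟩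
        · rw [ENNReal.le_div_iff_mul_le (Or.inl hc0) (Or.inl hctop), mul_comm]
          exact le_of_lt h1
        · rwa [ENNReal.mul_div_cancel hc0 hctop]
      refine measure_mono_null hsub (measure_iUnion_null fun q => ?_)
      by_cases hq : c * ((Real.toNNReal q : ℝ≥0∞) / c) < M
      · exact measure_mono_null (fun θ hθ => hθ.1) (key2 _ hq)
      · have : {θ | g θ ≤ (Real.toNNReal q : ℝ≥0∞) / c ∧
            c * ((Real.toNNReal q : ℝ≥0∞) / c) < M} = ∅ := by
          ext θ; simp [hq]
        simp [this]
    rw [ae_iff]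
    simpa [not_le] using hnull
  refine ⟨part1, ?_⟩
  filter_upwards [hae2, ENNReal.ae_le_essSup (μ := μ₀) g] with θ h1 h2
  exact ⟨h1, h2⟩
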